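/- (Second hypergeometric representation for q(G) = G^l, continuous case.) Let P_n = Σ_{j=0}^n (G^l)^j(x^n)/j! and write n = ml + i with 0 ≤ i ≤ l−1. Assume no element of Ŝ(i) is a nonpositive integer. Then P_{ml+i}(x) = η^{ml} · x^i · [∏_{β∈I} (S_β(i))_m] · Σ_{j=0}^m [(−m)_j / (∏_{β∈I} (S_β(i))_j · j!)] · (−(x/η)^l)^j. -/

import Mathlib

open Polynomial

/-- Pochhammer symbol `(a)_j = a(a+1)⋯(a+j−1)`. -/
noncomputable def poch (a : ℂ) (j : ℕ) : ℂ := ∏ s ∈ Finset.range j, (a + s)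

/-- The derivative operator `∂` on `ℂ[x]`. -/
noncomputable def Dop : Module.End ℂ (Polynomial ℂ) := Polynomial.derivative

/-- Multiplication by `x` on `ℂ[x]`. -/
noncomputable def Xop : Module.End ℂ (Polynomial ℂ) := LinearMap.mulLeft ℂ Polynomial.X

/-- `H = x∂`. -/
noncomputable def Hop : Module.End ℂ (Polynomial ℂ) := Xop * Dop

/-- `G = R(H)∘∂` with `R(H) = ρ·∏_{k=1}^d (H + α_k + 1)`. -/
noncomputable def Gop (d : ℕ) (α : ℕ → ℂ) (ρ : ℂ) : Module.End ℂ (Polynomial ℂ) :=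
  (Polynomial.aeval Hop
    (Polynomial.C ρ * ∏ k ∈ Finset.range d, (Polynomial.X + Polynomial.C (α k + 1)))) * Dop

lemma Hop_X_pow (n : ℕ) : Hop ((X : ℂ[X]) ^ n) = (n : ℂ) • X ^ n := by
  cases n with
  | zero => simp [Hop, Dop, Xop]
  | succ n =>
    simp only [Hop, Dop, Xop, Module.End.mul_apply]
    simp [derivative_X_pow, LinearMap.mulLeft_apply, smul_eq_C_mul]
    ring

lemma aeval_eig (f : Module.End ℂ (Polynomial ℂ)) (μ : ℂ) (v : ℂ[X]) (h : f v = μ • v)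
    (p : ℂ[X]) : (Polynomial.aeval f p) v = p.eval μ • v := by
  have hn : ∀ n : ℕ, (f ^ n) v = μ ^ n • v := by
    intro n
    induction n with
    | zero => simp
    | succ n ih =>
      rw [pow_succ, Module.End.mul_apply, h, map_smul, ih, smul_smul, pow_succ]
      ring_nf
  induction p using Polynomial.induction_on' with
  | add p q hp hq => simp [hp, hq, add_smul]
  | monomial n a =>
    simp [aeval_monomial, Module.End.mul_apply, Module.algebraMap_end_apply, hn,
      smul_smul, mul_comm]

/-- the coefficient `c_n` with `G x^n = c_n x^{n-1}`. -/
noncomputable def cc (d : ℕ) (α : ℕ → ℂ) (ρ : ℂ) (n : ℕ) : ℂ :=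
  ρ * (n : ℂ) * ∏ k ∈ Finset.range d, ((n : ℂ) + α k)

lemma Gop_X_pow (d : ℕ) (α : ℕ → ℂ) (ρ : ℂ) (n : ℕ) :
    Gop d α ρ ((X : ℂ[X]) ^ n) = cc d α ρ n • X ^ (n - 1) := by
  cases n with
  | zero => simp [Gop, Dop, cc]
  | succ n =>
    have hder : Dop ((X : ℂ[X]) ^ (n + 1)) = ((n : ℂ) + 1) • X ^ n := by
      simp [Dop, derivative_X_pow, smul_eq_C_mul]
    simp only [Gop, Module.End.mul_apply, hder, map_smul]
    rw [aeval_eig Hop (n : ℂ) (X ^ n) (Hop_X_pow n)]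
    simp only [Nat.add_sub_cancel, cc, smul_smul, eval_mul, eval_C, eval_prod, eval_add, eval_X]
    congr 1
    push_cast
    rw [Finset.prod_congr rfl
      (fun k _ => (by ring : (n : ℂ) + (α k + 1) = (↑n + 1 + α k)))]
    ring

lemma Gop_pow_X_pow (d : ℕ) (α : ℕ → ℂ) (ρ : ℂ) (t n : ℕ) :
    ((Gop d α ρ) ^ t) ((X : ℂ[X]) ^ n) =
      (∏ u ∈ Finset.range t, cc d α ρ (n - u)) • X ^ (n - t) := by
  induction t generalizing n with
  | zero => simp
  | succ t ih =>
    rw [pow_succ, Module.End.mul_apply, Gop_X_pow, map_smul, ih, smul_smul]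
    have h1 : n - 1 - t = n - (t + 1) := by omega
    have h2 : (∏ u ∈ Finset.range (t + 1), cc d α ρ (n - u))
        = cc d α ρ n * ∏ u ∈ Finset.range t, cc d α ρ (n - 1 - u) := by
      rw [Finset.prod_range_succ', mul_comm]
      simp only [Nat.sub_zero]
      congr 1
      exact Finset.prod_congr rfl fun u _ => by congr 1; omega
    rw [h1, h2]

lemma poch_succ (a : ℂ) (t : ℕ) : poch a (t + 1) = poch a t * (a + t) := by
  simp [poch, Finset.prod_range_succ]

lemma poch_ne_zero (a : ℂ) (h : ∀ s : ℕ, a ≠ -(s : ℂ)) (t : ℕ) : poch a t ≠ 0 := by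
  refine Finset.prod_ne_zero_iff.mpr fun s _ => ?_
  intro hz
  exact h s (by linear_combination hz)

lemma poch_neg_nat (m t : ℕ) (ht : t ≤ m) :
    poch (-(m : ℂ)) t * ((m - t).factorial : ℂ) = (-1) ^ t * (m.factorial : ℂ) := by
  induction t with
  | zero => simp [poch]
  | succ t ih =>
    have ht' : t ≤ m := by omega
    have h1 : m - t = (m - (t + 1)) + 1 := by omega
    have h2 : ((m - t).factorial : ℂ)
        = ((m - t : ℕ) : ℂ) * ((m - (t + 1)).factorial : ℂ) := by
      rw [h1, Nat.factorial_succ]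
      push_cast [← h1]
      ring
    have hmt : ((m - t : ℕ) : ℂ) = (m : ℂ) - t := by
      push_cast [Nat.cast_sub ht']
      ring
    have hne : ((m - t : ℕ) : ℂ) ≠ 0 := by
      simp only [Ne, Nat.cast_eq_zero]
      omega
    rw [poch_succ]
    have := ih ht'
    rw [h2] at this
    field_simp at this ⊢
    rw [hmt] at hne
    have hgoal : poch (-(m:ℂ)) t * (-(m:ℂ) + t) * ((m - (t+1)).factorial : ℂ) * ((m:ℂ) - t)
        = (-1)^(t+1) * (m.factorial : ℂ) * ((m:ℂ) - t) := by
      calc poch (-(m:ℂ)) t * (-(m:ℂ) + t) * ((m - (t+1)).factorial : ℂ) * ((m:ℂ) - t)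
          = -(((m:ℂ) - t) * (poch (-(m:ℂ)) t * (((m:ℂ)-t) * ((m - (t+1)).factorial : ℂ)))) := by ring
        _ = -(((m:ℂ) - t) * ((-1)^t * (m.factorial : ℂ))) := by rw [← this, hmt]; ring
        _ = (-1)^(t+1) * (m.factorial : ℂ) * ((m:ℂ) - t) := by ring
    exact mul_right_cancel₀ hne (by linear_combination hgoal)

lemma cc_eq (d : ℕ) (α : ℕ → ℂ) (ρ : ℂ) (n : ℕ) :
    cc d α ρ n = ρ * ∏ k ∈ Finset.range (d + 1),
      ((n : ℂ) + (if k < d then α k else 0)) := by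
  rw [cc]
  conv_rhs => rw [Finset.prod_range_succ]
  rw [if_neg (lt_irrefl d),
    show (∏ k ∈ Finset.range d, ((n : ℂ) + if k < d then α k else 0))
        = ∏ k ∈ Finset.range d, ((n : ℂ) + α k) from
      Finset.prod_congr rfl fun k hk => by rw [if_pos (Finset.mem_range.mp hk)]]
  ring

lemma block (d : ℕ) (α : ℕ → ℂ) (ρ : ℂ) (l : ℕ) (hl : 1 ≤ l) (m i : ℕ) (hi : i < l)
    (j : ℕ) (hj : j < m) :
    ∏ u ∈ Finset.range l, cc d α ρ (m * l + i - (l * j + u))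
      = ((l : ℂ) ^ (d + 1) * ρ) ^ l * ((m - j : ℕ) : ℂ) *
        ∏ kr ∈ (Finset.range (d + 1) ×ˢ Finset.range l).erase (d, i),
          ((((if kr.1 < d then α kr.1 else 0) + i - kr.2) / l + 1) + ((m - (j+1) : ℕ) : ℂ)) := by
  have hlC : (l : ℂ) ≠ 0 := Nat.cast_ne_zero.mpr (by omega)
  have hcast : ∀ u ∈ Finset.range l,
      ((m * l + i - (l * j + u) : ℕ) : ℂ) = (m : ℂ) * l + i - l * j - u := by
    intro u hu
    have hu' : u < l := Finset.mem_range.mp hu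
    have hle : l * j + u ≤ m * l + i := by nlinarith
    push_cast [Nat.cast_sub hle]
    ring
  rw [Finset.prod_congr rfl (fun u hu => by rw [cc_eq, hcast u hu])]
  rw [Finset.prod_mul_distrib, Finset.prod_const, Finset.prod_comm]
  rw [← Finset.prod_product'
    (f := fun (k u : ℕ) => ((m : ℂ) * l + i - l * j - (u : ℂ) + (if k < d then α k else 0)))]
  have hmem : (d, i) ∈ Finset.range (d + 1) ×ˢ Finset.range l := by
    simp [Finset.mem_product, hi]
  rw [← Finset.mul_prod_erase _ _ hmem]
  have hdi : ((m : ℂ) * l + i - l * j - i + (if d < d then α d else 0))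
      = (l : ℂ) * ((m - j : ℕ) : ℂ) := by
    rw [if_neg (lt_irrefl d)]
    push_cast [Nat.cast_sub (le_of_lt hj)]
    ring
  rw [hdi]
  have hfac : ∀ kr ∈ (Finset.range (d + 1) ×ˢ Finset.range l).erase (d, i),
      ((m : ℂ) * l + i - l * j - kr.2 + (if kr.1 < d then α kr.1 else 0))
        = (l : ℂ) * ((((if kr.1 < d then α kr.1 else 0) + i - kr.2) / l + 1)
            + ((m - (j+1) : ℕ) : ℂ)) := by
    intro kr hkr
    have hmj1 : ((m - (j+1) : ℕ) : ℂ) = (m : ℂ) - j - 1 := by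
      push_cast [Nat.cast_sub (by omega : j + 1 ≤ m)]
      ring
    rw [hmj1]
    field_simp
    ring
  rw [Finset.prod_congr rfl hfac, Finset.prod_mul_distrib, Finset.prod_const]
  have hcard : ((Finset.range (d + 1) ×ˢ Finset.range l).erase (d, i)).card
      = (d + 1) * l - 1 := by
    rw [Finset.card_erase_of_mem hmem, Finset.card_product, Finset.card_range,
      Finset.card_range]
  rw [hcard]
  have hpow : (l : ℂ) ^ ((d + 1) * l - 1) * (l : ℂ) = (l : ℂ) ^ ((d + 1) * l) := by
    rw [← pow_succ]
    congr 1
    have : 1 ≤ (d + 1) * l := by nlinarith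
    omega
  rw [mul_pow, ← pow_mul, Finset.card_range]
  calc ρ ^ l * ((l:ℂ) * ((m - j : ℕ) : ℂ) * ((l:ℂ) ^ ((d+1)*l-1) *
        ∏ kr ∈ (Finset.range (d + 1) ×ˢ Finset.range l).erase (d, i),
          ((((if kr.1 < d then α kr.1 else 0) + i - kr.2) / l + 1) + ((m - (j+1) : ℕ) : ℂ))))
      = ((l:ℂ) ^ ((d+1)*l-1) * (l:ℂ)) * ρ ^ l * ((m - j : ℕ) : ℂ) *
        ∏ kr ∈ (Finset.range (d + 1) ×ˢ Finset.range l).erase (d, i),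
          ((((if kr.1 < d then α kr.1 else 0) + i - kr.2) / l + 1) + ((m - (j+1) : ℕ) : ℂ)) := by
        ring
    _ = _ := by rw [hpow]

lemma key (d : ℕ) (α : ℕ → ℂ) (ρ : ℂ) (l : ℕ) (hl : 1 ≤ l) (m i : ℕ) (hi : i < l)
    (j : ℕ) : j ≤ m →
    (∏ u ∈ Finset.range (l * j), cc d α ρ (m * l + i - u)) * ((m - j).factorial : ℂ) *
        (∏ kr ∈ (Finset.range (d + 1) ×ˢ Finset.range l).erase (d, i),
          poch ((((if kr.1 < d then α kr.1 else 0) + i - kr.2) / l + 1)) (m - j))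
      = ((l : ℂ) ^ (d + 1) * ρ) ^ (l * j) * (m.factorial : ℂ) *
        ∏ kr ∈ (Finset.range (d + 1) ×ˢ Finset.range l).erase (d, i),
          poch ((((if kr.1 < d then α kr.1 else 0) + i - kr.2) / l + 1)) m := by
  induction j with
  | zero => intro _; simp
  | succ j ih =>
    intro hj
    have hjm : j < m := by omega
    have ihe := ih (by omega)
    have hmj : m - j = (m - (j + 1)) + 1 := by omega
    have hPP : (∏ kr ∈ (Finset.range (d + 1) ×ˢ Finset.range l).erase (d, i),
          poch ((((if kr.1 < d then α kr.1 else 0) + i - kr.2) / l + 1)) (m - j))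
        = (∏ kr ∈ (Finset.range (d + 1) ×ˢ Finset.range l).erase (d, i),
            poch ((((if kr.1 < d then α kr.1 else 0) + i - kr.2) / l + 1)) (m - (j + 1)))
          * ∏ kr ∈ (Finset.range (d + 1) ×ˢ Finset.range l).erase (d, i),
            (((((if kr.1 < d then α kr.1 else 0) + i - kr.2) / l + 1))
              + ((m - (j + 1) : ℕ) : ℂ)) := by
      rw [← Finset.prod_mul_distrib]
      exact Finset.prod_congr rfl fun kr _ => by rw [hmj, poch_succ]
    have hfact : ((m - j).factorial : ℂ)
        = ((m - j : ℕ) : ℂ) * ((m - (j + 1)).factorial : ℂ) := by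
      rw [hmj, Nat.factorial_succ]
      push_cast [← hmj]
      ring
    rw [hPP, hfact] at ihe
    rw [show l * (j + 1) = l * j + l by ring, Finset.prod_range_add,
      block d α ρ l hl m i hi j hjm]
    linear_combination ((l : ℂ) ^ (d + 1) * ρ) ^ l * ihe

lemma scalar_helper (t : ℕ) (P g Pj f pn Pm M e1 e2 : ℂ)
    (hf : f ≠ 0) (hg : g ≠ 0) (hPj : Pj ≠ 0) (he1 : e1 ≠ 0)
    (hkey : P * g * Pj = e2 * M * Pm)
    (hpn : pn * f = (-1) ^ t * M) :
    f⁻¹ * P = e1 * e2 * Pm * (pn / (Pj * g)) * ((-1) ^ t * e1⁻¹) := by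
  have hsq : ((-1 : ℂ)) ^ t * (-1) ^ t = 1 := by
    rw [← pow_add]
    exact Even.neg_one_pow ⟨t, by ring⟩
  have hP : P = e2 * M * Pm / (g * Pj) :=
    (eq_div_iff (mul_ne_zero hg hPj)).mpr (by linear_combination hkey)
  have hM : M = pn * f * (-1) ^ t := by linear_combination -((-1 : ℂ) ^ t) * hpn - M * hsq
  rw [hP, hM]
  linear_combination (e2 * pn * (-1) ^ t * Pm * (g * Pj)⁻¹) *
    (mul_inv_cancel₀ hf - mul_inv_cancel₀ he1)

set_option maxHeartbeats 1000000 in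
/-- Second hypergeometric representation for `q(G) = G^l`, continuous case: for
`n = ml + i`, `0 ≤ i < l`, assuming no element of `Ŝ(i)` is a nonpositive integer,
`P_{ml+i} = η^{ml} x^i ∏_{β∈I}(S_β(i))_m · Σ_{j=0}^m (−m)_j/(∏_{β∈I}(S_β(i))_j j!) (−(x/η)^l)^j`. -/
theorem stmt12 (d : ℕ) (α : ℕ → ℂ) (ρ : ℂ) (hρ : ρ ≠ 0) (l : ℕ) (hl : 1 ≤ l)
    (m i : ℕ) (hi : i < l) :
    let G := Gop d α ρ
    let η : ℂ := (l : ℂ) ^ (d + 1) * ρ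
    let A : ℕ → ℂ := fun k => if k < d then α k else 0
    let S : ℕ × ℕ → ℂ := fun kr => (A kr.1 + i - kr.2) / (l : ℂ) + 1
    let Ihat : Finset (ℕ × ℕ) := (Finset.range (d + 1) ×ˢ Finset.range l).erase (d, i)
    (∀ kr ∈ Ihat, ∀ s : ℕ, S kr ≠ -(s : ℂ)) →
    (∑ j ∈ Finset.range (m * l + i + 1),
        ((j.factorial : ℂ))⁻¹ • ((G ^ l) ^ j) (Polynomial.X ^ (m * l + i)))
      = (η ^ (m * l) * ∏ kr ∈ Ihat, poch (S kr) m) •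
          (Polynomial.X ^ i *
            ∑ j ∈ Finset.range (m + 1),
              (poch (-(m : ℂ)) j
                  / ((∏ kr ∈ Ihat, poch (S kr) j) * (j.factorial : ℂ)))
                • ((-(η⁻¹ ^ l)) ^ j • Polynomial.X ^ (l * j))) := by
  intro G η A S Ihat hS
  simp only [G, η, A, S, Ihat] at hS ⊢
  have hlC : (l : ℂ) ≠ 0 := Nat.cast_ne_zero.mpr (by omega)
  have hη : ((l : ℂ) ^ (d + 1) * ρ) ≠ 0 := mul_ne_zero (pow_ne_zero _ hlC) hρ
  have hPi : ∀ t : ℕ,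
      (∏ kr ∈ (Finset.range (d + 1) ×ˢ Finset.range l).erase (d, i),
        poch ((((if kr.1 < d then α kr.1 else 0) + i - kr.2) / l + 1)) t) ≠ 0 := fun t =>
    Finset.prod_ne_zero_iff.mpr fun kr hkr => poch_ne_zero _ (hS kr hkr) t
  -- LHS
  have hL1 : (∑ j ∈ Finset.range (m * l + i + 1),
        ((j.factorial : ℂ))⁻¹ • ((Gop d α ρ ^ l) ^ j) ((X : ℂ[X]) ^ (m * l + i)))
      = ∑ j ∈ Finset.range (m * l + i + 1),
        (((j.factorial : ℂ))⁻¹ * ∏ u ∈ Finset.range (l * j), cc d α ρ (m * l + i - u))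
          • (X : ℂ[X]) ^ (m * l + i - l * j) :=
    Finset.sum_congr rfl fun j _ => by
      rw [← pow_mul, Gop_pow_X_pow, smul_smul]
  have hsub : Finset.range (m + 1) ⊆ Finset.range (m * l + i + 1) :=
    Finset.range_subset_range.mpr (by nlinarith)
  have hvan : ∀ j ∈ Finset.range (m * l + i + 1), j ∉ Finset.range (m + 1) →
      (((j.factorial : ℂ))⁻¹ * ∏ u ∈ Finset.range (l * j), cc d α ρ (m * l + i - u))
        • (X : ℂ[X]) ^ (m * l + i - l * j) = 0 := by
    intro j _ hj
    have hj' : m + 1 ≤ j := by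
      simp only [Finset.mem_range, not_lt] at hj
      exact hj
    have hmem : m * l + i ∈ Finset.range (l * j) := by
      simp only [Finset.mem_range]
      nlinarith
    rw [Finset.prod_eq_zero hmem (by simp [cc])]
    simp
  rw [hL1, ← Finset.sum_subset hsub hvan]
  -- RHS: distribute and reflect the sum
  rw [Finset.mul_sum, Finset.smul_sum]
  conv_rhs => rw [← Finset.sum_range_reflect]
  refine Finset.sum_congr rfl fun j hj => ?_
  have hjm : j ≤ m := by have := Finset.mem_range.mp hj; omega
  simp only [Nat.add_sub_cancel]
  rw [mul_smul_comm, mul_smul_comm, ← pow_add, smul_smul, smul_smul]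
  have hexp : i + l * (m - j) = m * l + i - l * j := by
    have h2 : m - j + j = m := by omega
    have h3 : l * (m - j) + l * j = l * m := by rw [← Nat.mul_add, h2]
    have h4 : l * j ≤ l * m := Nat.mul_le_mul_left l hjm
    have h5 : m * l = l * m := Nat.mul_comm m l
    omega
  rw [hexp]
  congr 1
  have hkey := key d α ρ l hl m i hi j hjm
  have hpn := poch_neg_nat m (m - j) (by omega)
  rw [show m - (m - j) = j by omega] at hpn
  have hb : (-((((l : ℂ) ^ (d + 1) * ρ))⁻¹ ^ l)) ^ (m - j)
      = (-1) ^ (m - j) * ((((l : ℂ) ^ (d + 1) * ρ)) ^ (l * (m - j)))⁻¹ := by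
    rw [neg_pow, ← pow_mul, inv_pow]
  have hml : m * l = l * (m - j) + l * j := by
    have h2 : m - j + j = m := by omega
    calc m * l = l * m := Nat.mul_comm m l
      _ = l * ((m - j) + j) := by rw [h2]
      _ = l * (m - j) + l * j := Nat.mul_add l (m - j) j
  rw [hb, show (((l : ℂ) ^ (d + 1) * ρ)) ^ (m * l)
      = (((l : ℂ) ^ (d + 1) * ρ)) ^ (l * (m - j)) * (((l : ℂ) ^ (d + 1) * ρ)) ^ (l * j) from by
    rw [hml, pow_add]]
  have hfj : (j.factorial : ℂ) ≠ 0 := Nat.cast_ne_zero.mpr j.factorial_ne_zero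
  have hfmj : ((m - j).factorial : ℂ) ≠ 0 := Nat.cast_ne_zero.mpr (m - j).factorial_ne_zero
  have hPimj := hPi (m - j)
  have hηp : (((l : ℂ) ^ (d + 1) * ρ)) ^ (l * (m - j)) ≠ 0 := pow_ne_zero _ hη
  exact scalar_helper (m - j) _ _ _ _ _ _ _ _ _ hfj hfmj hPimj hηp hkey hpn
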